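/- arXiv:2205.02943 — 3 statements merged into one kernel-verified Lean document; each statement's English description precedes it below -/
import Mathlib

section
/- Let Z be a metric space with nonempty Cauchy boundary, and let K₁, K₂ be compact subsets of Z with inf_{x∈K₁} d(x,∂Z) > 0 and inf_{x∈K₂} d(x,∂Z) > 0. Then the set of similarity ratios of all similarities γ of Z satisfying γ(K₁) ∩ K₂ ≠ ∅ is contained in a compact subset of (0,∞). -/
open Metric UniformSpace

/-- The Cauchy boundary of a metric space `Z`: the complement of the image of `Z`
in its metric completion. -/
def cauchyBoundary (Z : Type*) [MetricSpace Z] : Set (UniformSpace.Completion Z) :=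
  (Set.range ((↑) : Z → UniformSpace.Completion Z))ᶜ


lemma boundary_map {Z : Type*} [MetricSpace Z] (γ : Z ≃ Z) (lam : ℝ) (hl : 0 < lam)
    (hγ : ∀ x y : Z, dist (γ x) (γ y) = lam * dist x y) {c : Completion Z}
    (hc : c ∈ cauchyBoundary Z) : Completion.map γ c ∈ cauchyBoundary Z := by
  have hlip : LipschitzWith lam.toNNReal γ := by
    intro a b
    simp only [edist_dist, hγ]
    rw [ENNReal.ofReal_mul hl.le]
    rfl
  have hlip' : LipschitzWith (lam⁻¹).toNNReal (γ.symm : Z → Z) := by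
    intro a b
    simp only [edist_dist]
    have : dist (γ.symm a) (γ.symm b) = lam⁻¹ * dist a b := by
      have := hγ (γ.symm a) (γ.symm b)
      simp at this
      field_simp [this]
      rw [this]; ring
    rw [this, ENNReal.ofReal_mul (by positivity)]
    rfl
  intro ⟨z, hz⟩
  apply hc
  have hcomp : Completion.map (γ.symm : Z → Z) (Completion.map γ c) = c := by
    rw [← Function.comp_apply (f := Completion.map (γ.symm : Z → Z)),
      Completion.map_comp hlip'.uniformContinuous hlip.uniformContinuous]
    have : ((γ.symm : Z → Z) ∘ γ) = id := by ext x; simp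
    rw [this, Completion.map_id, id_eq]
  refine ⟨γ.symm z, ?_⟩
  rw [← hcomp, ← hz, Completion.map_coe hlip'.uniformContinuous]

lemma key {Z : Type*} [MetricSpace Z] (hB : (cauchyBoundary Z).Nonempty) (γ : Z ≃ Z)
    (lam : ℝ) (hl : 0 < lam) (hγ : ∀ x y : Z, dist (γ x) (γ y) = lam * dist x y) (x : Z) :
    infDist (↑(γ x)) (cauchyBoundary Z) ≤ lam * infDist (↑x : Completion Z) (cauchyBoundary Z) := by
  have hlip : LipschitzWith lam.toNNReal γ := by
    intro a b
    simp only [edist_dist, hγ]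
    rw [ENNReal.ofReal_mul hl.le]
    rfl
  have hΓ : LipschitzWith lam.toNNReal (Completion.map γ) := hlip.completion_map
  rw [← div_le_iff₀' hl]
  by_contra h
  push_neg at h
  obtain ⟨c, hc, hlt⟩ := (infDist_lt_iff hB).1 h
  have hle : infDist (↑(γ x) : Completion Z) (cauchyBoundary Z) ≤ lam * dist (↑x : Completion Z) c :=
    calc infDist (↑(γ x) : Completion Z) (cauchyBoundary Z)
        ≤ dist (↑(γ x) : Completion Z) (Completion.map γ c) :=
        infDist_le_dist_of_mem (boundary_map γ lam hl hγ hc)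
      _ = dist (Completion.map γ ↑x) (Completion.map γ c) := by
        rw [Completion.map_coe hlip.uniformContinuous]
      _ ≤ lam * dist (↑x : Completion Z) c := by
        have := hΓ.dist_le_mul (↑x : Completion Z) c
        rwa [Real.coe_toNNReal _ hl.le] at this
  have : lam * dist (↑x : Completion Z) c < lam * (infDist (↑(γ x) : Completion Z) (cauchyBoundary Z) / lam) :=
    (mul_lt_mul_iff_right₀ hl).2 hlt
  rw [mul_div_cancel₀ _ hl.ne'] at this
  linarith

/-- for compact `K₁, K₂ ⊆ Z` at positive distance from the nonempty Cauchy
boundary, the similarity ratios of all similarities `γ` of `Z` with `γ(K₁) ∩ K₂ ≠ ∅`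
lie in a compact subset of `(0, ∞)`. -/
theorem stmt_1 {Z : Type*} [MetricSpace Z]
    (hB : (cauchyBoundary Z).Nonempty)
    (K₁ K₂ : Set Z) (hK₁ : IsCompact K₁) (hK₂ : IsCompact K₂)
    (h₁ : 0 < ⨅ x : K₁, infDist (↑(x : Z)) (cauchyBoundary Z))
    (h₂ : 0 < ⨅ x : K₂, infDist (↑(x : Z)) (cauchyBoundary Z)) :
    ∃ S : Set ℝ, IsCompact S ∧ S ⊆ Set.Ioi 0 ∧
      ∀ (γ : Z ≃ Z) (lam : ℝ), 0 < lam →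
        (∀ x y : Z, dist (γ x) (γ y) = lam * dist x y) →
        ((γ '' K₁) ∩ K₂).Nonempty → lam ∈ S := by
  set f : Z → ℝ := fun z => infDist (↑z : Completion Z) (cauchyBoundary Z) with hf
  rcases K₁.eq_empty_or_nonempty with rfl | hne₁
  · exact ⟨{1}, isCompact_singleton, by simp, fun γ lam _ _ h => by simp at h⟩
  rcases K₂.eq_empty_or_nonempty with rfl | hne₂
  · exact ⟨{1}, isCompact_singleton, by simp, fun γ lam _ _ h => by simp at h⟩
  have hfc : Continuous f := by
    exact (continuous_infDist_pt _).comp (Completion.continuous_coe Z)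
  obtain ⟨a₁, ha₁K, hM₁⟩ := hK₁.exists_isMaxOn hne₁ hfc.continuousOn
  obtain ⟨a₂, ha₂K, hM₂⟩ := hK₂.exists_isMaxOn hne₂ hfc.continuousOn
  set m₁ : ℝ := ⨅ x : K₁, f x with hm₁
  set m₂ : ℝ := ⨅ x : K₂, f x with hm₂
  have hbdd₁ : BddBelow (Set.range fun x : K₁ => f x) :=
    ⟨0, by rintro _ ⟨x, rfl⟩; exact infDist_nonneg⟩
  have hbdd₂ : BddBelow (Set.range fun x : K₂ => f x) :=
    ⟨0, by rintro _ ⟨x, rfl⟩; exact infDist_nonneg⟩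
  have hm₁le : ∀ x ∈ K₁, m₁ ≤ f x := fun x hx => ciInf_le hbdd₁ ⟨x, hx⟩
  have hm₂le : ∀ x ∈ K₂, m₂ ≤ f x := fun x hx => ciInf_le hbdd₂ ⟨x, hx⟩
  have hM₁pos : 0 < f a₁ := lt_of_lt_of_le h₁ (hm₁le a₁ ha₁K)
  have hm₁pos : 0 < m₁ := h₁
  have hm₂pos : 0 < m₂ := h₂
  refine ⟨Set.Icc (m₂ / f a₁) (f a₂ / m₁), isCompact_Icc, ?_, ?_⟩
  · intro y hy
    exact lt_of_lt_of_le (div_pos hm₂pos hM₁pos) hy.1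
  · rintro γ lam hl hγ ⟨y, ⟨x, hx, rfl⟩, hy₂⟩
    have hγ' : ∀ a b : Z, dist (γ.symm a) (γ.symm b) = lam⁻¹ * dist a b := by
      intro a b
      have := hγ (γ.symm a) (γ.symm b)
      simp only [Equiv.apply_symm_apply] at this
      field_simp [this]
      rw [this]; ring
    have k1 : f (γ x) ≤ lam * f x := key hB γ lam hl hγ x
    have k2 : f x ≤ lam⁻¹ * f (γ x) := by
      have := key hB γ.symm lam⁻¹ (inv_pos.2 hl) hγ' (γ x)
      simpa using this
    have b1 : m₂ ≤ f (γ x) := hm₂le _ hy₂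
    have b2 : f (γ x) ≤ f a₂ := hM₂ hy₂
    have b3 : m₁ ≤ f x := hm₁le _ hx
    have b4 : f x ≤ f a₁ := hM₁ hx
    constructor
    · rw [div_le_iff₀ hM₁pos]
      nlinarith
    · rw [le_div_iff₀ hm₁pos]
      have h5 : lam * f x ≤ lam * (lam⁻¹ * f (γ x)) := by
        exact mul_le_mul_of_nonneg_left k2 hl.le
      rw [← mul_assoc, mul_inv_cancel₀ hl.ne', one_mul] at h5
      nlinarith
end

section
/- Let G be a group acting by homeomorphisms on a topological space M and D ⊴ G a normal subgroup. If D acts properly discontinuously on M and G/D acts properly discontinuously on M/D, then G acts properly discontinuously on M: for every compact K ⊆ M, the set {g ∈ G : gK ∩ K ≠ ∅} is finite. -/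
/-- if `G` acts by homeomorphisms on `M`, `D ⊴ G` acts properly
discontinuously on `M`, and `G/D` acts properly discontinuously on `M/D` (with the
quotient topology, via `(gD)·(Dx) = D(gx)`), then `G` acts properly discontinuously
on `M`. -/
theorem stmt_4 {G : Type*} [Group G] {M : Type*} [TopologicalSpace M] [MulAction G M]
    (hcont : ∀ g : G, Continuous (fun x : M => g • x))
    (D : Subgroup G) [D.Normal]
    (hD : ∀ K : Set M, IsCompact K → {d : D | ∃ x ∈ K, (d : G) • x ∈ K}.Finite)
    (hGD : ∀ L : Set (Quotient (MulAction.orbitRel D M)), IsCompact L →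
      {c : G ⧸ D | ∃ g : G, (g : G ⧸ D) = c ∧ ∃ x : M,
        Quotient.mk (MulAction.orbitRel D M) x ∈ L ∧
        Quotient.mk (MulAction.orbitRel D M) (g • x) ∈ L}.Finite) :
    ∀ K : Set M, IsCompact K → {g : G | ∃ x ∈ K, g • x ∈ K}.Finite := by
  intro K hK
  set π : M → Quotient (MulAction.orbitRel D M) :=
    Quotient.mk (MulAction.orbitRel D M) with hπ
  have hπcont : Continuous π := continuous_quotient_mk'
  have hL : IsCompact (π '' K) := hK.image hπcont
  set C : Set (G ⧸ D) := {c : G ⧸ D | ∃ g : G, (g : G ⧸ D) = c ∧ ∃ x : M,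
      π x ∈ π '' K ∧ π (g • x) ∈ π '' K} with hCdef
  have hCfin : C.Finite := hGD (π '' K) hL
  set S : Set G := {g : G | ∃ x ∈ K, g • x ∈ K} with hSdef
  have hsub : S ⊆ ⋃ c ∈ C, {g ∈ S | (g : G ⧸ D) = c} := by
    intro g hg
    obtain ⟨x, hx, hgx⟩ := hg
    have hc : (g : G ⧸ D) ∈ C := ⟨g, rfl, x, ⟨x, hx, rfl⟩, ⟨g • x, hgx, rfl⟩⟩
    exact Set.mem_biUnion hc ⟨⟨x, hx, hgx⟩, rfl⟩
  refine Set.Finite.subset (Set.Finite.biUnion hCfin ?_) hsub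
  intro c _
  by_cases hne : ({g ∈ S | (g : G ⧸ D) = c} : Set G).Nonempty
  · obtain ⟨g₀, hg₀S, hg₀c⟩ := hne
    have hK' : IsCompact (K ∪ (fun x : M => g₀⁻¹ • x) '' K) :=
      hK.union (hK.image (hcont g₀⁻¹))
    set K' : Set M := K ∪ (fun x : M => g₀⁻¹ • x) '' K with hK'def
    have hfin := hD K' hK'
    have : {g ∈ S | (g : G ⧸ D) = c} ⊆
        (fun d : D => g₀ * (d : G)) '' {d : D | ∃ x ∈ K', (d : G) • x ∈ K'} := by
      intro g ⟨hgS, hgc⟩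
      obtain ⟨x, hx, hgx⟩ := hgS
      have hmem : g₀⁻¹ * g ∈ D := by
        have h : (g₀ : G ⧸ D) = (g : G ⧸ D) := hg₀c.trans hgc.symm
        exact QuotientGroup.eq.mp h
      refine ⟨⟨g₀⁻¹ * g, hmem⟩, ⟨x, Or.inl hx, ?_⟩, by group⟩
      show (g₀⁻¹ * g) • x ∈ K'
      rw [mul_smul]
      exact Or.inr ⟨g • x, hgx, rfl⟩
    exact (hfin.image _).subset this
  · rw [Set.not_nonempty_iff_eq_empty] at hne
    simp [hne]
end

section
/- Let α = 2cos(2π/7) and σ(α) = 2cos(4π/7). Then the multiplicative subgroup of ℝ₊* generated by |α| and |σ(α)| has rank 2; equivalently, there are no integers (a,b) ≠ (0,0) with |α|^a = |σ(α)|^b. -/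
open Real

open Polynomial
noncomputable def pQ : ℚ[X] := X^3 + X^2 - C 2 * X - 1

theorem pQ_deg : pQ.natDegree = 3 := by unfold pQ; compute_degree!

theorem pQ_monic : pQ.Monic := by unfold pQ; monicity!

theorem pQ_roots : pQ.roots = 0 := by
  classical
  rw [Multiset.eq_zero_iff_forall_notMem]
  intro r hr
  have h0 : pQ ≠ 0 := by
    have := pQ_deg; intro h; rw [h] at this; simp at this
  rw [mem_roots h0] at hr
  have h2 : r^3 + r^2 - 2*r - 1 = 0 := by
    have := hr
    simp only [IsRoot, pQ, eval_sub, eval_add, eval_pow, eval_mul, eval_X, eval_C, eval_one] at this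
    linarith
  have hr' : aeval r ((X^3 + X^2 - C 2 * X - 1 : ℤ[X])) = 0 := by
    simp only [map_sub, map_add, map_pow, map_mul, aeval_X, aeval_C, map_one, map_ofNat, eq_intCast]
    linear_combination h2
  obtain ⟨k, hk, hdvd⟩ := exists_integer_of_is_root_of_monic (A := ℤ) (by monicity!) hr'
  have hc0 : ((X^3 + X^2 - C 2 * X - 1 : ℤ[X])).coeff 0 = -1 := by
    simp [coeff_one]
  rw [hc0] at hdvd
  have hk1 : k = 1 ∨ k = -1 := by
    have := Int.isUnit_iff.mp (isUnit_of_dvd_unit hdvd (by norm_num))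
    tauto
  have hrk : (k:ℚ)^3 + (k:ℚ)^2 - 2*(k:ℚ) - 1 = 0 := by
    rw [hk, eq_intCast] at h2; push_cast at h2 ⊢; linear_combination h2
  rcases hk1 with rfl | rfl <;> norm_num at hrk

theorem pQ_irr : Irreducible pQ := by
  rw [Polynomial.irreducible_iff_roots_eq_zero_of_degree_le_three (by rw [pQ_deg]; norm_num)
    (by rw [pQ_deg])]
  exact pQ_roots

theorem aeval_pQ (t : ℝ) (h : t^3 + t^2 - 2*t - 1 = 0) : aeval t pQ = 0 := by
  simp only [pQ, map_sub, map_add, map_pow, map_mul, aeval_X, aeval_C, map_one, map_ofNat,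
    eq_ratCast]
  linear_combination h

/-- the key algebraic lemma -/
theorem key_s11 (m n : ℕ)
    (hrel : (2 * Real.cos (2 * π / 7))^(2*m) * (2 * Real.cos (4 * π / 7))^(2*n) = 1) :
    m = 0 ∧ n = 0 := by
  set α : ℝ := 2 * Real.cos (2 * π / 7) with hαdef
  set β : ℝ := 2 * Real.cos (4 * π / 7) with hβdef
  set γ : ℝ := 2 * Real.cos (6 * π / 7) with hγdef
  have pi_pos := Real.pi_pos
  -- basic trig relations
  have hβα : β = α^2 - 2 := by
    rw [hαdef, hβdef, show (4:ℝ) * π / 7 = 2 * (2 * π / 7) by ring, Real.cos_two_mul]; ring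
  have hγβ : γ = β^2 - 2 := by
    rw [hβdef, hγdef, show (6:ℝ) * π / 7 = 2*π - 2 * (4 * π / 7) by ring, Real.cos_two_pi_sub,
      Real.cos_two_mul]; ring
  have hαγ : α = γ^2 - 2 := by
    rw [hγdef, hαdef, show (2:ℝ) * π / 7 = 2*π - 2 * (6 * π / 7) by ring, Real.cos_two_pi_sub,
      Real.cos_two_mul]; ring
  -- α is a root of the cubic
  have hcube : α^3 + α^2 - 2*α - 1 = 0 := by
    have h7 : Real.cos (4*(2*π/7)) = Real.cos (3*(2*π/7)) := by
      rw [show (4:ℝ)*(2*π/7) = 2*π - 3*(2*π/7) by ring, Real.cos_two_pi_sub]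
    rw [show (4:ℝ)*(2*π/7) = 2*(2*(2*π/7)) by ring, Real.cos_two_mul, Real.cos_two_mul,
      Real.cos_three_mul] at h7
    have hclt : Real.cos (2*π/7) < 1 := by
      have h := Real.strictAntiOn_cos (a := 0) (b := 2*π/7) ⟨le_refl 0, le_of_lt pi_pos⟩
        ⟨by positivity, by linarith⟩ (by positivity)
      rwa [Real.cos_zero] at h
    have hfac : (Real.cos (2*π/7) - 1) *
        (8*Real.cos (2*π/7)^3 + 4*Real.cos (2*π/7)^2 - 4*Real.cos (2*π/7) - 1) = 0 := by
      linear_combination h7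
    rcases mul_eq_zero.mp hfac with h | h
    · linarith
    · rw [hαdef]; linear_combination h
  have hβcube : β^3 + β^2 - 2*β - 1 = 0 := by
    rw [hβα]; linear_combination (α^3 - α^2 - 2*α + 1) * hcube
  have hγcube : γ^3 + γ^2 - 2*γ - 1 = 0 := by
    rw [hγβ]; linear_combination (β^3 - β^2 - 2*β + 1) * hβcube
  -- numeric bounds
  have hα1 : 1 < α := by
    have h2 : Real.cos (π/3) < Real.cos (2*π/7) :=
      Real.strictAntiOn_cos (a := 2*π/7) (b := π/3) ⟨by positivity, by linarith⟩
        ⟨by positivity, by linarith⟩ (by linarith)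
    rw [Real.cos_pi_div_three] at h2
    rw [hαdef]; linarith
  have hβ0 : β < 0 := by
    have : Real.cos (4*π/7) < 0 :=
      Real.cos_neg_of_pi_div_two_lt_of_lt (by linarith) (by linarith)
    rw [hβdef]; linarith
  have hγ0 : γ < 0 := by
    have : Real.cos (6*π/7) < 0 :=
      Real.cos_neg_of_pi_div_two_lt_of_lt (by linarith) (by linarith)
    rw [hγdef]; linarith
  have hαne : α ≠ 0 := by linarith
  have hβne : β ≠ 0 := ne_of_lt hβ0
  have hγne : γ ≠ 0 := ne_of_lt hγ0
  -- minpoly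
  have hmin : minpoly ℚ α = pQ :=
    (minpoly.eq_of_irreducible_of_monic pQ_irr (aeval_pQ α hcube) pQ_monic).symm
  -- the relation polynomial
  set g : ℚ[X] := X^(2*m) * (X^2 - C 2)^(2*n) - 1 with hgdef
  have haevalg : ∀ t : ℝ, aeval t g = t^(2*m) * (t^2-2)^(2*n) - 1 := by
    intro t
    simp [hgdef]
  have hgα : aeval α g = 0 := by
    have h := haevalg α
    rw [← hβα, hrel] at h
    rw [h]; norm_num
  have hdvd : pQ ∣ g := hmin ▸ minpoly.dvd ℚ α hgα
  obtain ⟨q, hq⟩ := hdvd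
  have hgβ : β^(2*m) * γ^(2*n) = 1 := by
    have : aeval β g = 0 := by
      rw [hq, map_mul, aeval_pQ β hβcube, zero_mul]
    rw [haevalg, ← hγβ] at this; linear_combination this
  have hgγ : γ^(2*m) * α^(2*n) = 1 := by
    have : aeval γ g = 0 := by
      rw [hq, map_mul, aeval_pQ γ hγcube, zero_mul]
    rw [haevalg, ← hαγ] at this; linear_combination this
  -- logs
  set x := Real.log α with hxdef
  set y := Real.log β with hydef
  set z := Real.log γ with hzdef
  have hxpos : 0 < x := Real.log_pos hα1
  have e1 : (2*m : ℝ) * x + (2*n : ℝ) * y = 0 := by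
    have := congrArg Real.log hrel
    rw [Real.log_mul (pow_ne_zero _ hαne) (pow_ne_zero _ hβne), Real.log_pow, Real.log_pow,
      Real.log_one] at this
    push_cast at this ⊢; linear_combination this
  have e2 : (2*m : ℝ) * y + (2*n : ℝ) * z = 0 := by
    have := congrArg Real.log hgβ
    rw [Real.log_mul (pow_ne_zero _ hβne) (pow_ne_zero _ hγne), Real.log_pow, Real.log_pow,
      Real.log_one] at this
    push_cast at this ⊢; linear_combination this
  have e3 : (2*m : ℝ) * z + (2*n : ℝ) * x = 0 := by
    have := congrArg Real.log hgγ
    rw [Real.log_mul (pow_ne_zero _ hγne) (pow_ne_zero _ hαne), Real.log_pow, Real.log_pow,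
      Real.log_one] at this
    push_cast at this ⊢; linear_combination this
  have hsum : ((2*m : ℝ)^3 + (2*n : ℝ)^3) * x = 0 := by
    linear_combination (2*m:ℝ)^2 * e1 - (2*m:ℝ)*(2*n:ℝ) * e2 + (2*n:ℝ)^2 * e3
  have hcubes : (2*m : ℝ)^3 + (2*n : ℝ)^3 = 0 := by
    rcases mul_eq_zero.mp hsum with h | h
    · exact h
    · exact absurd h (ne_of_gt hxpos)
  have h1 : (0:ℝ) ≤ (2*(m:ℝ))^3 := by positivity
  have h2 : (0:ℝ) ≤ (2*(n:ℝ))^3 := by positivity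
  have hm' : (2*(m:ℝ))^3 = 0 := by linarith
  have hn' : (2*(n:ℝ))^3 = 0 := by linarith
  have hm0 : (m:ℝ) = 0 := by
    have := pow_eq_zero_iff (n := 3) (by norm_num) |>.mp hm'
    linarith
  have hn0 : (n:ℝ) = 0 := by
    have := pow_eq_zero_iff (n := 3) (by norm_num) |>.mp hn'
    linarith
  exact ⟨by exact_mod_cast hm0, by exact_mod_cast hn0⟩

/-- the multiplicative subgroup of `ℝ₊*` generated by `|2cos(2π/7)|` and
`|2cos(4π/7)|` has rank 2: there are no integers `(a,b) ≠ (0,0)` with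
`|2cos(2π/7)|^a = |2cos(4π/7)|^b`. -/
theorem stmt_11 :
    ∀ a b : ℤ,
      |2 * Real.cos (2 * π / 7)| ^ a = |2 * Real.cos (4 * π / 7)| ^ b →
      a = 0 ∧ b = 0 := by
  intro a b hab
  set α : ℝ := 2 * Real.cos (2 * π / 7) with hαdef
  set β : ℝ := 2 * Real.cos (4 * π / 7) with hβdef
  have pi_pos := Real.pi_pos
  have hα1 : 1 < α := by
    have h2 : Real.cos (π/3) < Real.cos (2*π/7) :=
      Real.strictAntiOn_cos (a := 2*π/7) (b := π/3) ⟨by positivity, by linarith⟩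
        ⟨by positivity, by linarith⟩ (by linarith)
    rw [Real.cos_pi_div_three] at h2
    rw [hαdef]; linarith
  have hβ0 : β < 0 := by
    have : Real.cos (4*π/7) < 0 :=
      Real.cos_neg_of_pi_div_two_lt_of_lt (by linarith) (by linarith)
    rw [hβdef]; linarith
  have hβ1 : -1 < β := by
    have h2 : Real.cos (2*π/3) < Real.cos (4*π/7) :=
      Real.strictAntiOn_cos (a := 4*π/7) (b := 2*π/3) ⟨by positivity, by linarith⟩
        ⟨by positivity, by linarith⟩ (by linarith)
    rw [show (2:ℝ)*π/3 = π - π/3 by ring, Real.cos_pi_sub, Real.cos_pi_div_three] at h2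
    rw [hβdef]; linarith
  have hαpos : (0:ℝ) < α := by linarith
  have habsα : |α| = α := abs_of_pos hαpos
  have habsβ : |β| = -β := abs_of_neg hβ0
  have hBpos : (0:ℝ) < -β := by linarith
  have hBlt1 : -β < 1 := by linarith
  have hβne : β ≠ 0 := ne_of_lt hβ0
  have hBne : |β| ≠ 0 := by rw [habsβ]; exact ne_of_gt hBpos
  have hAne : |α| ≠ 0 := by rw [habsα]; exact ne_of_gt hαpos
  -- logs
  have hx : 0 < Real.log α := Real.log_pos hα1
  have hy : Real.log (-β) < 0 := Real.log_neg hBpos hBlt1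
  have la : (a:ℝ) * Real.log α = (b:ℝ) * Real.log (-β) := by
    have := congrArg Real.log hab
    rw [Real.log_zpow, Real.log_zpow, habsα, habsβ] at this
    exact this
  rcases le_total 0 a with ha | ha <;> rcases le_total 0 b with hb | hb
  · -- 0 ≤ a, 0 ≤ b
    have h1 : 0 ≤ (a:ℝ) * Real.log α :=
      mul_nonneg (by exact_mod_cast ha) hx.le
    have h2 : (b:ℝ) * Real.log (-β) ≤ 0 :=
      mul_nonpos_of_nonneg_of_nonpos (by exact_mod_cast hb) hy.le
    have h3 : (a:ℝ) * Real.log α = 0 := le_antisymm (by linarith) h1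
    have h4 : (b:ℝ) * Real.log (-β) = 0 := by linarith
    have ha0 : (a:ℝ) = 0 := by
      rcases mul_eq_zero.mp h3 with h | h
      · exact h
      · exact absurd h (ne_of_gt hx)
    have hb0 : (b:ℝ) = 0 := by
      rcases mul_eq_zero.mp h4 with h | h
      · exact h
      · exact absurd h (ne_of_lt hy)
    exact ⟨by exact_mod_cast ha0, by exact_mod_cast hb0⟩
  · -- 0 ≤ a, b ≤ 0
    set m := a.toNat with hmdef
    set n := (-b).toNat with hndef
    have ham : a = (m:ℤ) := (Int.toNat_of_nonneg ha).symm
    have hbn : -b = (n:ℤ) := (Int.toNat_of_nonneg (by linarith)).symm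
    have h1 : |α|^(m:ℤ) * |β|^(n:ℤ) = 1 := by
      rw [← ham, ← hbn, zpow_neg, hab]
      exact mul_inv_cancel₀ (zpow_ne_zero _ hBne)
    rw [zpow_natCast, zpow_natCast, habsα, habsβ] at h1
    have h3 : α^(2*m) * β^(2*n) = 1 := by
      have h2 := congrArg (· ^ 2) h1
      simp only [mul_pow, ← pow_mul, one_pow] at h2
      rw [Even.neg_pow ⟨n, by ring⟩ β] at h2
      rw [mul_comm m 2, mul_comm n 2] at h2
      exact h2
    obtain ⟨hm0, hn0⟩ := key_s11 m n h3
    constructor <;> omega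
  · -- a ≤ 0, 0 ≤ b
    set m := (-a).toNat with hmdef
    set n := b.toNat with hndef
    have ham : -a = (m:ℤ) := (Int.toNat_of_nonneg (by linarith)).symm
    have hbn : b = (n:ℤ) := (Int.toNat_of_nonneg hb).symm
    have h1 : |α|^(m:ℤ) * |β|^(n:ℤ) = 1 := by
      rw [← ham, ← hbn, zpow_neg, ← hab]
      exact inv_mul_cancel₀ (zpow_ne_zero _ hAne)
    rw [zpow_natCast, zpow_natCast, habsα, habsβ] at h1
    have h3 : α^(2*m) * β^(2*n) = 1 := by
      have h2 := congrArg (· ^ 2) h1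
      simp only [mul_pow, ← pow_mul, one_pow] at h2
      rw [Even.neg_pow ⟨n, by ring⟩ β] at h2
      rw [mul_comm m 2, mul_comm n 2] at h2
      exact h2
    obtain ⟨hm0, hn0⟩ := key_s11 m n h3
    constructor <;> omega
  · -- a ≤ 0, b ≤ 0
    have h1 : (a:ℝ) * Real.log α ≤ 0 :=
      mul_nonpos_of_nonpos_of_nonneg (by exact_mod_cast ha) hx.le
    have h2 : 0 ≤ (b:ℝ) * Real.log (-β) := by
      have hbr : (b:ℝ) ≤ 0 := by exact_mod_cast hb
      nlinarith [hy.le]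
    have h3 : (a:ℝ) * Real.log α = 0 := le_antisymm h1 (by linarith)
    have h4 : (b:ℝ) * Real.log (-β) = 0 := by linarith
    have ha0 : (a:ℝ) = 0 := by
      rcases mul_eq_zero.mp h3 with h | h
      · exact h
      · exact absurd h (ne_of_gt hx)
    have hb0 : (b:ℝ) = 0 := by
      rcases mul_eq_zero.mp h4 with h | h
      · exact h
      · exact absurd h (ne_of_lt hy)
    exact ⟨by exact_mod_cast ha0, by exact_mod_cast hb0⟩
end
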